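/- Let G be a connected graph on N vertices and T a spanning tree of G rooted at v_r. If a set S of vertex pairs has the property that for every vertex v of T and every i < ⌊log₂ d_T(v)⌋ the pair (v, anc_{2^i}(v)) ∈ S, then |S| ≤ N·⌊log₂ N⌋, and between any two vertices of G there is a walk that is a concatenation of at most 2(⌊log₂ N⌋ + 1) tree paths each joining a pair in S or its reverse. -/

import Mathlib

/-- Appending chains: if there is a chain from `u` ending at `r`, and a chain from `r`,
we can concatenate. -/
private lemma chain_append_aux {α : Type*} {R : α → α → Prop} :
    ∀ (l₁ : List α) (u r : α), List.Chain R u l₁ → (u :: l₁).getLast (by simp) = r →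
    ∀ l₂ : List α, List.Chain R r l₂ →
    List.Chain R u (l₁ ++ l₂) ∧
      (u :: (l₁ ++ l₂)).getLast (by simp) = (r :: l₂).getLast (by simp)
  | [], u, r, _, h, l₂, hc => by
      simp only [List.getLast_singleton] at h
      subst h
      exact ⟨hc, rfl⟩
  | a :: t, u, r, hch, h, l₂, hc => by
      rw [List.Chain, List.chain_cons] at hch
      have h' : (a :: t).getLast (by simp) = r := by
        rw [← h]; exact (List.getLast_cons (by simp)).symm
      obtain ⟨c1, c2⟩ := chain_append_aux t a r hch.2 h' l₂ hc
      refine ⟨List.chain_cons.mpr ⟨hch.1, c1⟩, ?_⟩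
      rw [← c2]
      exact List.getLast_cons (by simp)

/-- Reversing a chain for a symmetric relation. -/
private lemma chain_reverse_aux {α : Type*} {R : α → α → Prop}
    (hsym : ∀ a b, R a b → R b a) :
    ∀ (m : List α) (v r : α), List.Chain R v m → (v :: m).getLast (by simp) = r →
    ∃ m' : List α, List.Chain R r m' ∧ (r :: m').getLast (by simp) = v ∧
      m'.length = m.length
  | [], v, r, _, h => by
      simp only [List.getLast_singleton] at h
      exact ⟨[], by subst h; exact ⟨List.Chain.nil, rfl, rfl⟩⟩
  | a :: t, v, r, hch, h => by
      rw [List.Chain, List.chain_cons] at hch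
      have h' : (a :: t).getLast (by simp) = r := by
        rw [← h]; exact (List.getLast_cons (by simp)).symm
      obtain ⟨m', c1, c2, c3⟩ := chain_reverse_aux hsym t a r hch.2 h'
      obtain ⟨d1, d2⟩ := chain_append_aux m' r a c1 c2 [v]
        (List.chain_cons.mpr ⟨hsym _ _ hch.1, List.Chain.nil⟩)
      refine ⟨m' ++ [v], d1, ?_, by simp [c3]⟩
      rw [d2]
      simp

/-- For a spanning tree (given by `parent`, depth `d`, and `root`) of a connected graph on
`N` vertices, the set `S` of binary-lifting pairs `(v, parent^[2^i] v)` for `i < ⌊log₂ (d v)⌋`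
has at most `N * ⌊log₂ N⌋` elements, and any two vertices are joined by a walk that is a
concatenation of at most `2 (⌊log₂ N⌋ + 1)` tree paths each joining a pair in `S'` (the
recorded pairs with all valid jump powers) or its reverse. -/
theorem stmt11 (N : ℕ) (parent : Fin N → Fin N) (d : Fin N → ℕ) (root : Fin N)
    (hd : ∀ v, d v < N) (hroot : ∀ v, parent^[d v] v = root)
    (S : Finset (Fin N × Fin N))
    (hS : S = Finset.univ.biUnion fun v =>
      (Finset.range (Nat.log 2 (d v))).image fun i => (v, parent^[2 ^ i] v)) :
    S.card ≤ N * Nat.log 2 N ∧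
    ∀ u v : Fin N, ∃ l : List (Fin N),
      List.Chain
        (fun x y => (∃ i, 2 ^ i ≤ d x ∧ y = parent^[2 ^ i] x) ∨
          (∃ i, 2 ^ i ≤ d y ∧ x = parent^[2 ^ i] y)) u l ∧
      (u :: l).getLast (by simp) = v ∧
      l.length ≤ 2 * (Nat.log 2 N + 1) := by
  subst hS
  constructor
  · calc (Finset.univ.biUnion fun v : Fin N =>
          (Finset.range (Nat.log 2 (d v))).image fun i => (v, parent^[2 ^ i] v)).card
        ≤ ∑ v : Fin N, ((Finset.range (Nat.log 2 (d v))).image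
            fun i => (v, parent^[2 ^ i] v)).card := Finset.card_biUnion_le
      _ ≤ ∑ v : Fin N, Nat.log 2 N := by
          refine Finset.sum_le_sum fun v _ => Finset.card_image_le.trans ?_
          simpa using Nat.log_mono_right (hd v).le
      _ = N * Nat.log 2 N := by simp [mul_comm]
  · set R : Fin N → Fin N → Prop := fun x y =>
      (∃ i, 2 ^ i ≤ d x ∧ y = parent^[2 ^ i] x) ∨
        (∃ i, 2 ^ i ≤ d y ∧ x = parent^[2 ^ i] y) with hR
    have hsym : ∀ a b, R a b → R b a := fun a b h => h.symm
    have hex : ∀ x : Fin N, ∃ m, parent^[m] x = root := fun x => ⟨d x, hroot x⟩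
    set t : Fin N → ℕ := fun x => Nat.find (hex x) with ht
    have ht_spec : ∀ x, parent^[t x] x = root := fun x => Nat.find_spec (hex x)
    have ht_le : ∀ x, t x ≤ d x := fun x => Nat.find_min' (hex x) (hroot x)
    -- upward chain to the root
    have up : ∀ n x, t x ≤ n → ∃ l : List (Fin N),
        List.Chain R x l ∧ (x :: l).getLast (by simp) = root ∧
        l.length ≤ (if t x = 0 then 0 else Nat.log 2 (t x) + 1) := by
      intro n
      induction n with
      | zero =>
          intro x hx
          have hx0 : t x = 0 := Nat.le_zero.mp hx
          have : x = root := by have := ht_spec x; rwa [hx0] at this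
          exact ⟨[], List.Chain.nil, by simp [this], by simp [hx0]⟩
      | succ n ih =>
          intro x hx
          by_cases hx0 : t x = 0
          · have : x = root := by have := ht_spec x; rwa [hx0] at this
            exact ⟨[], List.Chain.nil, by simp [this], by simp [hx0]⟩
          · set i := Nat.log 2 (t x) with hi
            have h1 : 2 ^ i ≤ t x := Nat.pow_log_le_self 2 hx0
            have h2 : t x < 2 ^ (i + 1) := Nat.lt_pow_succ_log_self (by norm_num) _
            set w := parent^[2 ^ i] x with hw
            have hwr : parent^[t x - 2 ^ i] w = root := by
              rw [hw, ← Function.iterate_add_apply, Nat.sub_add_cancel h1]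
              exact ht_spec x
            have htw : t w ≤ t x - 2 ^ i := Nat.find_min' (hex w) hwr
            have htw2 : t w < 2 ^ i := by
              have : t x - 2 ^ i < 2 ^ i := by omega
              omega
            have htwlt : t w < t x := lt_of_le_of_lt htw (by
              have := Nat.one_le_two_pow (n := i); omega)
            obtain ⟨l', c1, c2, c3⟩ := ih w (by omega)
            refine ⟨w :: l', List.chain_cons.mpr ⟨Or.inl ⟨i, le_trans h1 (ht_le x), rfl⟩, c1⟩,
              ?_, ?_⟩
            · rw [← c2]; exact List.getLast_cons (by simp)
            · simp only [List.length_cons, if_neg hx0]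
              by_cases hw0 : t w = 0
              · rw [if_pos hw0] at c3; omega
              · rw [if_neg hw0] at c3
                have : Nat.log 2 (t w) < i := Nat.log_lt_of_lt_pow hw0 htw2
                omega
    have bound : ∀ x : Fin N, (if t x = 0 then 0 else Nat.log 2 (t x) + 1)
        ≤ Nat.log 2 N + 1 := by
      intro x
      split
      · omega
      · have : Nat.log 2 (t x) ≤ Nat.log 2 N :=
          Nat.log_mono_right (le_trans (ht_le x) (hd x).le)
        omega
    intro u v
    obtain ⟨l₁, a1, a2, a3⟩ := up (t u) u le_rfl
    obtain ⟨l₂, b1, b2, b3⟩ := up (t v) v le_rfl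
    obtain ⟨m', c1, c2, c3⟩ := chain_reverse_aux hsym l₂ v root b1 b2
    obtain ⟨d1, d2⟩ := chain_append_aux l₁ u root a1 a2 m' c1
    refine ⟨l₁ ++ m', d1, by rw [d2, c2], ?_⟩
    have := bound u
    have := bound v
    simp only [List.length_append]
    omega
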